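/- In ℝ³ with basis H, E_1, E_2, set D_1 = (1,0,0), D_2 = (2,−1,0), D_3 = (3,−2,−1), E_1 = (0,1,0), E_2 = (0,0,1). Then the anticanonical class −K = (3(n+1)/2)·(1,0,0) − (n−1)·(0,1,0) − ((n−3)/2)·(0,0,1) of Q(n,3) satisfies −K = 2D_1 + 2D_2 + ((n−3)/2)·D_3; consequently −K lies in the interior of cone(D_1, D_2, D_3) for n ≥ 4 and on its boundary for n = 3. -/

import Mathlib

namespace Stmt13

noncomputable def E1 : Fin 3 → ℝ := ![0, 1, 0]
noncomputable def E2 : Fin 3 → ℝ := ![0, 0, 1]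
noncomputable def D1 : Fin 3 → ℝ := ![1, 0, 0]          -- D₁ = H
noncomputable def D2 : Fin 3 → ℝ := ![2, -1, 0]         -- D₂ = 2H - E₁
noncomputable def D3 : Fin 3 → ℝ := ![3, -2, -1]        -- D₃ = 3H - 2E₁ - E₂

/-- The anticanonical class `-K_{Q(n,3)} = (3(n+1)/2)H - (n-1)E₁ - ((n-3)/2)E₂`. -/
noncomputable def antiK (n : ℕ) : Fin 3 → ℝ :=
  (3 * ((n : ℝ) + 1) / 2) • D1 - ((n : ℝ) - 1) • E1 - (((n : ℝ) - 3) / 2) • E2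

/-- The nef cone of `Q(n,3)`: the cone generated by `D₁, D₂, D₃`. -/
def nefCone : Set (Fin 3 → ℝ) :=
  {v | ∃ a b c : ℝ, 0 ≤ a ∧ 0 ≤ b ∧ 0 ≤ c ∧ v = a • D1 + b • D2 + c • D3}


lemma antiK_coords (n : ℕ) :
    antiK n = ![3 * ((n : ℝ) + 1) / 2, -((n : ℝ) - 1), -(((n : ℝ) - 3) / 2)] := by
  funext i
  fin_cases i <;>
    simp [antiK, D1, E1, E2, Matrix.cons_val_zero, Matrix.cons_val_one] <;> ring

/-- The open "strictly positive coefficients" region, expressed via the inverse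
coordinate functionals. -/
def U : Set (Fin 3 → ℝ) :=
  {v | 0 < v 0 + 2 * v 1 - v 2 ∧ 0 < -v 1 + 2 * v 2 ∧ 0 < -v 2}

lemma U_open : IsOpen U := by
  have h0 : Continuous fun v : Fin 3 → ℝ => v 0 + 2 * v 1 - v 2 := by fun_prop
  have h1 : Continuous fun v : Fin 3 → ℝ => -v 1 + 2 * v 2 := by fun_prop
  have h2 : Continuous fun v : Fin 3 → ℝ => -v 2 := by fun_prop
  exact ((isOpen_lt continuous_const h0).inter
    ((isOpen_lt continuous_const h1).inter (isOpen_lt continuous_const h2)))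

lemma U_subset : U ⊆ nefCone := by
  rintro v ⟨h1, h2, h3⟩
  refine ⟨v 0 + 2 * v 1 - v 2, -v 1 + 2 * v 2, -v 2, le_of_lt h1, le_of_lt h2,
    le_of_lt h3, ?_⟩
  funext i
  fin_cases i <;>
    simp [D1, D2, D3, Matrix.cons_val_zero, Matrix.cons_val_one] <;> ring

lemma nefCone_coord2 {v : Fin 3 → ℝ} (hv : v ∈ nefCone) : v 2 ≤ 0 := by
  obtain ⟨a, b, c, _, _, hc, rfl⟩ := hv
  simp [D1, D2, D3]
  linarith

/-- The anticanonical class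
`-K = (3(n+1)/2)H - (n-1)E₁ - ((n-3)/2)E₂` of `Q(n,3)` satisfies
`-K = 2D₁ + 2D₂ + ((n-3)/2)D₃`; consequently `-K` lies in the interior of
`cone(D₁, D₂, D₃)` for `n ≥ 4` (so `Q(n,3)` is Fano) and on its boundary for `n = 3`
(so `Q(3,3)` is weak Fano). -/
theorem antiK_position (n : ℕ) (hn : 3 ≤ n) :
    antiK n = (2 : ℝ) • D1 + (2 : ℝ) • D2 + (((n : ℝ) - 3) / 2) • D3 ∧
    (4 ≤ n → antiK n ∈ interior nefCone) ∧
    (n = 3 → antiK n ∈ nefCone ∧ antiK n ∉ interior nefCone) := by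
  have hK : antiK n = ![3 * ((n : ℝ) + 1) / 2, -((n : ℝ) - 1), -(((n : ℝ) - 3) / 2)] :=
    antiK_coords n
  refine ⟨?_, ?_, ?_⟩
  · rw [hK]; funext i
    fin_cases i <;>
      simp [D1, D2, D3, Matrix.cons_val_zero, Matrix.cons_val_one] <;> ring
  · intro h4
    have hn4 : (4 : ℝ) ≤ (n : ℝ) := by exact_mod_cast h4
    have hU : antiK n ∈ U := by
      rw [hK]
      refine ⟨?_, ?_, ?_⟩ <;>
        simp [U, Matrix.cons_val_zero, Matrix.cons_val_one] <;> linarith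
    exact interior_maximal U_subset U_open hU
  · rintro rfl
    constructor
    · refine ⟨2, 2, 0, by norm_num, by norm_num, le_refl 0, ?_⟩
      rw [hK]; funext i
      fin_cases i <;>
        simp [D1, D2, D3, Matrix.cons_val_zero, Matrix.cons_val_one] <;> norm_num
    · intro hmem
      rw [mem_interior_iff_mem_nhds, Metric.mem_nhds_iff] at hmem
      obtain ⟨ε, hε, hball⟩ := hmem
      set w : Fin 3 → ℝ := Function.update (antiK 3) 2 (ε / 2) with hw
      have hwball : w ∈ Metric.ball (antiK 3) ε := by
        rw [Metric.mem_ball, dist_pi_lt_iff hε]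
        intro i
        by_cases hi : i = 2
        · subst hi
          have h20 : antiK 3 2 = 0 := by rw [hK]; norm_num; rfl
          simp [hw, Function.update_self, Real.dist_eq, h20]
          rw [abs_of_nonneg (by positivity)]
          linarith
        · simp [hw, Function.update_of_ne hi]
          exact hε
      have := nefCone_coord2 (hball hwball)
      rw [hw, Function.update_self] at this
      linarith


end Stmt13
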